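/- Let s₀ = σ₀ + it₀ with σ₀ > 1 and let σ > 1. Then as T → ∞, ∫_2^T |ζ₂(s₀, σ+it)|² dt = ζ₂^{[2]}(s₀, 2σ) · T + O(1). -/

import Mathlib

open Finset Complex MeasureTheory

noncomputable section
namespace S9

def A (s₀ : ℂ) (n : ℕ) : ℂ := ∑ m ∈ Finset.Icc 1 (n+1), (m:ℂ)^(-s₀)
def bb (s₀ : ℂ) (σ : ℝ) (n : ℕ) : ℂ := ((n+2:ℕ):ℂ)^(-(σ:ℂ)) * A s₀ n
def LL (n : ℕ) : ℝ := Real.log ((n:ℝ)+2)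
def zB (r : ℝ) : ℝ := ∑' m : ℕ, ((m:ℝ)+1)^(-r)
def ff (s₀ : ℂ) (σ : ℝ) (q : ℕ × ℕ) (t : ℝ) : ℂ :=
  bb s₀ σ q.1 * star (bb s₀ σ q.2) * Complex.exp (((t * (LL q.2 - LL q.1) : ℝ) : ℂ) * I)
def DD (s₀ : ℂ) (σ : ℝ) (T : ℝ) (q : ℕ × ℕ) : ℂ :=
  if q.1 = q.2 then ((‖bb s₀ σ q.1‖^2 * (T-2) : ℝ) : ℂ) else 0
def EE (s₀ : ℂ) (σ : ℝ) (T : ℝ) (q : ℕ × ℕ) : ℂ :=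
  (∫ t in (2:ℝ)..T, ff s₀ σ q t) - DD s₀ σ T q
def MM (s₀ : ℂ) (σ : ℝ) (q : ℕ × ℕ) : ℝ :=
  2 * zB s₀.re^2 * (((q.1:ℝ)+2)^(-σ-(σ-1)/2) * |(q.1:ℝ)-(q.2:ℝ)|^(-(1+(σ-1)/2))
    + ((q.2:ℝ)+2)^(-σ-(σ-1)/2) * |(q.2:ℝ)-(q.1:ℝ)|^(-(1+(σ-1)/2)))


lemma summable_shift (r : ℝ) (hr : 1 < r) (k : ℕ) :
    Summable (fun n : ℕ => ((n:ℝ)+k)^(-r) ) := by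
  have h0 : Summable (fun n : ℕ => ((n:ℝ))^(-r)) :=
    Real.summable_nat_rpow.2 (by linarith)
  have := h0.comp_injective (i := fun n : ℕ => n + k) (add_left_injective k)
  refine this.congr fun n => ?_
  simp only [Function.comp_apply]
  push_cast
  ring_nf

lemma zB_nonneg (r : ℝ) : 0 ≤ zB r := tsum_nonneg fun m => Real.rpow_nonneg (by positivity) _

lemma normIccSum_le (s₀ : ℂ) (h0 : 1 < s₀.re) (k : ℕ) :
    ‖∑ m ∈ Finset.Icc 1 k, (m:ℂ)^(-s₀)‖ ≤ zB s₀.re := by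
  have hsum : Summable (fun m : ℕ => ((m:ℝ)+1)^(-s₀.re)) := by
    simpa using summable_shift s₀.re h0 1
  calc ‖∑ m ∈ Finset.Icc 1 k, (m:ℂ)^(-s₀)‖
      ≤ ∑ m ∈ Finset.Icc 1 k, ‖(m:ℂ)^(-s₀)‖ := _root_.norm_sum_le _ _
    _ = ∑ m ∈ Finset.Icc 1 k, ((m:ℝ))^(-s₀.re) := by
        refine Finset.sum_congr rfl fun m hm => ?_
        have hm1 : 0 < m := (Finset.mem_Icc.1 hm).1
        rw [Complex.norm_natCast_cpow_of_pos hm1]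
        simp
    _ = ∑ j ∈ Finset.range k, ((1+j:ℕ):ℝ)^(-s₀.re) := by
        rw [← Finset.Ico_add_one_right_eq_Icc, Finset.sum_Ico_eq_sum_range]
        simp
    _ ≤ zB s₀.re := by
        refine le_trans (le_of_eq ?_) (Summable.sum_le_tsum (Finset.range k)
          (fun m _ => Real.rpow_nonneg (by positivity) _) hsum)
        refine Finset.sum_congr rfl fun j _ => ?_
        push_cast; rw [add_comm]

lemma normA_le (s₀ : ℂ) (h0 : 1 < s₀.re) (n : ℕ) : ‖A s₀ n‖ ≤ zB s₀.re :=
  normIccSum_le s₀ h0 (n+1)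

lemma norm_bb (s₀ : ℂ) (σ : ℝ) (n : ℕ) :
    ‖bb s₀ σ n‖ = ((n:ℝ)+2)^(-σ) * ‖A s₀ n‖ := by
  rw [bb, norm_mul, Complex.norm_natCast_cpow_of_pos (by omega)]
  norm_num

lemma norm_bb_le (s₀ : ℂ) (σ : ℝ) (h0 : 1 < s₀.re) (n : ℕ) :
    ‖bb s₀ σ n‖ ≤ zB s₀.re * ((n:ℝ)+2)^(-σ) := by
  rw [norm_bb, mul_comm]
  exact mul_le_mul_of_nonneg_right (normA_le s₀ h0 n) (Real.rpow_nonneg (by positivity) _)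

lemma summable_norm_bb (s₀ : ℂ) (σ : ℝ) (h0 : 1 < s₀.re) (hσ : 1 < σ) :
    Summable (fun n => ‖bb s₀ σ n‖) := by
  refine Summable.of_nonneg_of_le (fun n => norm_nonneg _) (norm_bb_le s₀ σ h0)
    (((summable_shift σ hσ 2).mul_left _).congr fun n => rfl)

lemma sq_norm_bb (s₀ : ℂ) (σ : ℝ) (n : ℕ) :
    ‖bb s₀ σ n‖^2 = ‖A s₀ n‖^2 * ((n:ℝ)+2)^(-(2*σ)) := by
  rw [norm_bb, mul_pow, ← Real.rpow_natCast (((n:ℝ)+2)^(-σ)) 2, ← Real.rpow_mul (by positivity)]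
  ring_nf

lemma summable_sq_norm_bb (s₀ : ℂ) (σ : ℝ) (h0 : 1 < s₀.re) (hσ : 1 < σ) :
    Summable (fun n => ‖bb s₀ σ n‖^2) := by
  refine Summable.of_nonneg_of_le (fun n => by positivity) (fun n => ?_)
    (((summable_shift (2*σ) (by linarith) 2).mul_left (zB s₀.re ^2)).congr fun n => rfl)
  rw [sq_norm_bb]
  exact mul_le_mul_of_nonneg_right (by
    have := normA_le s₀ h0 n
    have h := norm_nonneg (A s₀ n)
    nlinarith) (Real.rpow_nonneg (by positivity) _)



lemma summable_shift1 (r : ℝ) (hr : 1 < r) :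
    Summable (fun n : ℕ => ((n:ℝ)+1)^(-r)) := by
  have h0 : Summable (fun n : ℕ => ((n:ℝ))^(-r)) :=
    Real.summable_nat_rpow.2 (by linarith)
  have h1 := h0.comp_injective (i := fun n : ℕ => n + 1) (add_left_injective 1)
  refine h1.congr fun n => ?_
  show ((((n+1:ℕ)):ℝ))^(-r) = _
  push_cast
  ring_nf

lemma summable_orig (s₀ s : ℂ) (h0 : 1 < s₀.re) (hs : 1 < s.re) :
    Summable (fun p : ℕ × ℕ => ((p.1+1:ℕ):ℂ)^(-s₀) * ((p.1+p.2+2:ℕ):ℂ)^(-s)) := by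
  have hA : Summable (fun n : ℕ => ((n:ℝ)+1)^(-s₀.re)) := summable_shift1 _ h0
  have hB : Summable (fun n : ℕ => ((n:ℝ)+1)^(-s.re)) := summable_shift1 _ hs
  have hM : Summable (fun p : ℕ × ℕ => ((p.1:ℝ)+1)^(-s₀.re) * ((p.2:ℝ)+1)^(-s.re)) :=
    hA.mul_of_nonneg hB (fun n => Real.rpow_nonneg (by positivity) _)
      (fun n => Real.rpow_nonneg (by positivity) _)
  refine Summable.of_norm_bounded hM ?_
  intro p
  rw [norm_mul, Complex.norm_natCast_cpow_of_pos (by omega),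
    Complex.norm_natCast_cpow_of_pos (by omega)]
  simp only [Complex.neg_re]
  push_cast
  refine mul_le_mul_of_nonneg_left ?_ (Real.rpow_nonneg (by positivity) _)
  exact Real.rpow_le_rpow_of_nonpos (by positivity) (by linarith) (by linarith)

lemma reindex (s₀ s : ℂ) (h0 : 1 < s₀.re) (hs : 1 < s.re) :
    (∑' p : ℕ × ℕ, ((p.1+1:ℕ):ℂ)^(-s₀) * ((p.1+p.2+2:ℕ):ℂ)^(-s))
      = ∑' n : ℕ, A s₀ n * ((n+2:ℕ):ℂ)^(-s) := by
  set g : ℕ × ℕ → ℂ := fun p => ((p.1+1:ℕ):ℂ)^(-s₀) * ((p.1+p.2+2:ℕ):ℂ)^(-s) with hg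
  have hsum : Summable g := summable_orig s₀ s h0 hs
  set e := Finset.HasAntidiagonal.sigmaAntidiagonalEquivProd (A := ℕ) with he
  have hsum2 : Summable (fun x : (Σ n : ℕ, {x // x ∈ Finset.HasAntidiagonal.antidiagonal n}) => g (e x)) :=
    e.summable_iff.2 hsum
  have h1 : ∑' p : ℕ × ℕ, g p = ∑' x : (Σ n : ℕ, {x // x ∈ Finset.HasAntidiagonal.antidiagonal n}), g (e x) :=
    (e.tsum_eq g).symm
  rw [h1, Summable.tsum_sigma hsum2]
  congr 1
  funext n
  have h2 : ∀ c : {x // x ∈ Finset.HasAntidiagonal.antidiagonal n}, g (e ⟨n, c⟩) = g c.1 := fun c => rfl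
  rw [tsum_congr h2, Finset.tsum_subtype (Finset.HasAntidiagonal.antidiagonal n) g,
    Finset.Nat.sum_antidiagonal_eq_sum_range_succ_mk]
  have h3 : ∀ k ∈ Finset.range (n+1), g (k, n - k)
      = ((k+1:ℕ):ℂ)^(-s₀) * ((n+2:ℕ):ℂ)^(-s) := by
    intro k hk
    have hkn : k + (n - k) = n := by
      have := Finset.mem_range.1 hk; omega
    simp only [hg, hkn]
  rw [Finset.sum_congr rfl h3, ← Finset.sum_mul]
  congr 1
  rw [A, ← Finset.Ico_add_one_right_eq_Icc, Finset.sum_Ico_eq_sum_range]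
  simp [add_comm]

lemma cpow_split (σ : ℝ) (t : ℝ) (n : ℕ) :
    ((n+2:ℕ):ℂ)^(-((σ:ℂ) + t*I)) = ((n+2:ℕ):ℂ)^(-(σ:ℂ)) * Complex.exp ((-(t * LL n)) * I) := by
  have hx : ((n+2:ℕ):ℂ) ≠ 0 := by
    simp only [ne_eq, Nat.cast_eq_zero]; omega
  have hlog : Complex.log ((n+2:ℕ):ℂ) = ((LL n : ℝ) : ℂ) := by
    rw [LL, Complex.ofReal_log (by positivity)]
    norm_num
  rw [Complex.cpow_def_of_ne_zero hx, Complex.cpow_def_of_ne_zero hx, ← Complex.exp_add, hlog]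
  congr 1
  ring

lemma LL_strictMono : StrictMono LL := by
  intro a b h
  have : (a:ℝ) < b := by exact_mod_cast h
  exact Real.log_lt_log (by positivity) (by linarith)

lemma LL_ne (a b : ℕ) (h : a ≠ b) : LL b - LL a ≠ 0 := by
  rcases h.lt_or_gt with h | h
  · exact ne_of_gt (sub_pos.2 (LL_strictMono h))
  · exact ne_of_lt (sub_neg.2 (LL_strictMono h))



/-- core off-diagonal inequality -/
lemma core (σ : ℝ) (hσ : 1 < σ) (a c : ℕ) (hac : a < c) :
    ((a:ℝ)+2)^(-σ) * ((c:ℝ)+2)^(-σ) * (2 / (LL c - LL a))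
      ≤ 2 * (((a:ℝ)+2)^(-σ - (σ-1)/2) * (|(a:ℝ) - c|)^(-(1+(σ-1)/2))) := by
  set p : ℝ := (a:ℝ)+2 with hp
  set r : ℝ := (c:ℝ)+2 with hr
  have hac' : (a:ℝ) < c := by exact_mod_cast hac
  have hp0 : 0 < p := by positivity
  have hr0 : 0 < r := by positivity
  have hpr : p < r := by simp only [hp, hr]; linarith
  set d : ℝ := r - p with hd
  have hd1 : 1 ≤ d := by
    have : (a:ℝ) + 1 ≤ c := by exact_mod_cast Nat.succ_le_of_lt hac
    simp only [hd, hp, hr]; linarith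
  have hd0 : 0 < d := by linarith
  have habs : |(a:ℝ) - c| = d := by
    rw [abs_of_nonpos (by linarith)]; simp only [hd, hp, hr]; ring
  have hΔ : d / r ≤ LL c - LL a := by
    have h1 : Real.log (p / r) ≤ p / r - 1 := Real.log_le_sub_one_of_pos (by positivity)
    have h2 : Real.log (p / r) = LL a - LL c := by
      rw [Real.log_div (ne_of_gt hp0) (ne_of_gt hr0)]; rfl
    have h3 : p / r - 1 = -(d / r) := by
      simp only [hd]; field_simp; ring
    rw [h2, h3] at h1
    linarith
  have hΔ0 : 0 < LL c - LL a := lt_of_lt_of_le (by positivity) hΔ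
  have h2r : 2 / (LL c - LL a) ≤ 2 * r / d := by
    rw [div_le_div_iff₀ hΔ0 hd0]
    calc 2 * d = 2 * r * (d / r) := by field_simp
      _ ≤ 2 * r * (LL c - LL a) := mul_le_mul_of_nonneg_left hΔ (by positivity)
  have hnn : 0 ≤ p^(-σ) * r^(-σ) := by positivity
  have key : r^(-(σ-1)) ≤ p^(-(σ-1)/2) * d^(-(σ-1)/2) := by
    have hpd : p * d ≤ r^2 := by nlinarith
    have h1 : (r^2 : ℝ)^(-(σ-1)/2) ≤ (p*d)^(-(σ-1)/2) :=
      Real.rpow_le_rpow_of_nonpos (by positivity) hpd (by linarith)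
    have h2 : (r^2 : ℝ)^(-(σ-1)/2) = r^(-(σ-1)) := by
      rw [← Real.rpow_natCast r 2, ← Real.rpow_mul (le_of_lt hr0)]
      congr 1; push_cast; ring
    have h3 : (p*d)^(-(σ-1)/2) = p^(-(σ-1)/2) * d^(-(σ-1)/2) :=
      Real.mul_rpow (le_of_lt hp0) (le_of_lt hd0)
    rw [← h2, ← h3]; exact h1
  have e1 : p ^ (-σ) * p ^ (-(σ-1)/2) = p ^ (-σ - (σ-1)/2) := by
    rw [← Real.rpow_add hp0]; congr 1; ring
  have e2 : d ^ (-(σ-1)/2) / d = d ^ (-(1+(σ-1)/2)) := by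
    rw [show d ^ (-(σ-1)/2) / d = d ^ (-(σ-1)/2) * d^(-(1:ℝ)) by
      rw [Real.rpow_neg_one]; ring, ← Real.rpow_add hd0]
    congr 1; ring
  calc p^(-σ) * r^(-σ) * (2 / (LL c - LL a))
      ≤ p^(-σ) * r^(-σ) * (2 * r / d) := mul_le_mul_of_nonneg_left h2r hnn
    _ = 2 * (p^(-σ) * (r^(-σ) * r) / d) := by ring
    _ = 2 * (p^(-σ) * r^(-(σ-1)) / d) := by
        rw [show r^(-σ) * r = r^(-σ) * r^(1:ℝ) by rw [Real.rpow_one],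
          ← Real.rpow_add hr0]
        congr 2
        ring_nf
    _ ≤ 2 * (p^(-σ) * (p^(-(σ-1)/2) * d^(-(σ-1)/2)) / d) := by
        gcongr
    _ = 2 * (p^(-σ - (σ-1)/2) * (|(a:ℝ) - c|)^(-(1+(σ-1)/2))) := by
        rw [habs, ← e1, ← e2]; ring



lemma summable_absdiff (β : ℝ) (hβ : 1 < β) (a : ℕ) :
    Summable (fun m : ℕ => |(a:ℝ) - m| ^ (-β)) := by
  rw [← summable_nat_add_iff (a+1)]
  have : ∀ n : ℕ, |(a:ℝ) - (n + (a+1) : ℕ)| ^ (-β) = ((n:ℝ)+1)^(-β) := by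
    intro n
    congr 1
    push_cast
    rw [abs_of_nonpos (by linarith)]
    ring
  refine (Summable.congr ?_ fun n => (this n).symm)
  have h0 : Summable (fun n : ℕ => ((n:ℝ))^(-β)) := Real.summable_nat_rpow.2 (by linarith)
  refine (h0.comp_injective (i := fun n : ℕ => n + 1) (add_left_injective 1)).congr fun n => ?_
  show ((((n+1:ℕ)):ℝ))^(-β) = _
  push_cast
  ring_nf

lemma tsum_absdiff_le (β : ℝ) (hβ : 1 < β) (a : ℕ) :
    ∑' m : ℕ, |(a:ℝ) - m| ^ (-β) ≤ 2 * zB β := by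
  have hsum := summable_absdiff β hβ a
  have hz : Summable (fun n : ℕ => ((n:ℝ)+1)^(-β)) := by
    have h0 : Summable (fun n : ℕ => ((n:ℝ))^(-β)) := Real.summable_nat_rpow.2 (by linarith)
    refine (h0.comp_injective (i := fun n : ℕ => n + 1) (add_left_injective 1)).congr fun n => ?_
    show ((((n+1:ℕ)):ℝ))^(-β) = _
    push_cast; ring_nf
  rw [← Summable.sum_add_tsum_nat_add (a+1) hsum]
  have htail : ∑' n : ℕ, |(a:ℝ) - (n + (a+1) : ℕ)| ^ (-β) = zB β := by
    refine tsum_congr fun n => ?_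
    congr 1
    push_cast
    rw [abs_of_nonpos (by linarith)]
    ring
  have hfin : ∑ m ∈ Finset.range (a+1), |(a:ℝ) - m| ^ (-β) ≤ zB β := by
    have hrefl := Finset.sum_range_reflect (fun m : ℕ => |(a:ℝ) - m| ^ (-β)) (a+1)
    have hs : ∀ j ∈ Finset.range (a+1), |(a:ℝ) - ((a+1-1-j : ℕ):ℝ)| ^ (-β) = ((j:ℝ)) ^ (-β) := by
      intro j hj
      have hj' : j ≤ a := by have := Finset.mem_range.1 hj; omega
      have : ((a+1-1-j : ℕ):ℝ) = (a:ℝ) - j := by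
        have : a+1-1-j = a - j := by omega
        rw [this]
        push_cast [hj']
        ring
      rw [this]
      congr 1
      rw [_root_.abs_of_nonneg (by
        have : (j:ℝ) ≤ a := by exact_mod_cast hj'
        linarith)]
      ring
    rw [← hrefl, Finset.sum_congr rfl hs, Finset.sum_range_succ']
    have h0 : ((0:ℕ):ℝ) ^ (-β) = 0 := by
      rw [Nat.cast_zero, Real.zero_rpow (by linarith)]
    rw [h0, add_zero]
    calc ∑ j ∈ Finset.range a, ((j+1:ℕ):ℝ)^(-β)
        = ∑ j ∈ Finset.range a, ((j:ℝ)+1)^(-β) := by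
          refine Finset.sum_congr rfl fun j _ => by push_cast; ring_nf
      _ ≤ zB β := Summable.sum_le_tsum _ (fun m _ => Real.rpow_nonneg (by positivity) _) hz
  rw [htail]
  linarith

/-- first majorant piece is summable -/
lemma summable_m1 (α β : ℝ) (hα : 1 < α) (hβ : 1 < β) :
    Summable (fun q : ℕ × ℕ => ((q.1:ℝ)+2)^(-α) * |(q.1:ℝ) - q.2| ^ (-β)) := by
  have hrow : ∀ a : ℕ, Summable (fun m : ℕ => ((a:ℝ)+2)^(-α) * |(a:ℝ) - m| ^ (-β)) :=
    fun a => (summable_absdiff β hβ a).mul_left _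
  have hnn : 0 ≤ (fun q : ℕ × ℕ => ((q.1:ℝ)+2)^(-α) * |(q.1:ℝ) - q.2| ^ (-β)) :=
    fun q => by positivity
  refine (summable_prod_of_nonneg hnn).2 ⟨fun a => hrow a, ?_⟩
  · have hsh : Summable (fun n : ℕ => ((n:ℝ)+2)^(-α) * (2 * zB β)) := by
      have h0 : Summable (fun n : ℕ => ((n:ℝ))^(-α)) := Real.summable_nat_rpow.2 (by linarith)
      refine ((h0.comp_injective (i := fun n : ℕ => n + 2)
        (add_left_injective 2)).mul_right (2 * zB β)).congr fun n => ?_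
      show (((n+2:ℕ)):ℝ)^(-α) * _ = _
      push_cast
      ring_nf
    refine Summable.of_nonneg_of_le (fun a => tsum_nonneg fun m => by positivity)
      (fun a => ?_) hsh
    show ∑' (y:ℕ), ((a:ℝ)+2)^(-α) * |(a:ℝ) - y|^(-β) ≤ ((a:ℝ)+2)^(-α) * (2 * zB β)
    rw [Summable.tsum_mul_left _ (summable_absdiff β hβ a)]
    exact mul_le_mul_of_nonneg_left (tsum_absdiff_le β hβ a) (by positivity)

lemma summable_m2 (α β : ℝ) (hα : 1 < α) (hβ : 1 < β) :
    Summable (fun q : ℕ × ℕ => ((q.2:ℝ)+2)^(-α) * |(q.2:ℝ) - q.1| ^ (-β)) := by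
  have := (Equiv.prodComm ℕ ℕ).summable_iff.2 (summable_m1 α β hα hβ)
  exact this.congr fun q => rfl



/-- the (n,m) term of the expanded square -/
lemma norm_ff (s₀ : ℂ) (σ : ℝ) (q : ℕ × ℕ) (t : ℝ) :
    ‖ff s₀ σ q t‖ = ‖bb s₀ σ q.1‖ * ‖bb s₀ σ q.2‖ := by
  rw [ff, norm_mul, norm_mul, norm_star]
  have : ‖Complex.exp (((t * (LL q.2 - LL q.1) : ℝ) : ℂ) * I)‖ = 1 := by
    rw [Complex.norm_exp]
    simp
  rw [this, mul_one]

lemma continuous_ff (s₀ : ℂ) (σ : ℝ) (q : ℕ × ℕ) : Continuous (ff s₀ σ q) := by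
  refine continuous_const.mul (Complex.continuous_exp.comp ?_)
  exact (Complex.continuous_ofReal.comp (continuous_id.mul continuous_const)).mul continuous_const

lemma diag_integral (s₀ : ℂ) (σ : ℝ) (n : ℕ) (T : ℝ) :
    ∫ t in (2:ℝ)..T, ff s₀ σ (n, n) t = ((‖bb s₀ σ n‖^2 * (T-2) : ℝ) : ℂ) := by
  have h1 : ∀ t : ℝ, ff s₀ σ (n, n) t = ((‖bb s₀ σ n‖^2 : ℝ) : ℂ) := by
    intro t
    rw [ff]
    simp only [sub_self, mul_zero, Complex.ofReal_zero, zero_mul, Complex.exp_zero, mul_one]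
    rw [show star (bb s₀ σ n) = (starRingEnd ℂ) (bb s₀ σ n) from rfl, Complex.mul_conj]
    congr 1
    rw [Complex.normSq_eq_norm_sq]
  rw [intervalIntegral.integral_congr (fun t _ => h1 t), intervalIntegral.integral_const]
  rw [Complex.real_smul]
  push_cast
  ring

lemma offdiag_integral (s₀ : ℂ) (σ : ℝ) (a b : ℕ) (hab : a ≠ b) (T : ℝ) :
    ‖∫ t in (2:ℝ)..T, ff s₀ σ (a, b) t‖
      ≤ ‖bb s₀ σ a‖ * ‖bb s₀ σ b‖ * (2 / |LL b - LL a|) := by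
  set θ : ℝ := LL b - LL a with hθdef
  have hθ : θ ≠ 0 := by
    rcases hab.lt_or_gt with h | h
    · exact ne_of_gt (sub_pos.2 (by
        have : (a:ℝ) < b := by exact_mod_cast h
        exact Real.log_lt_log (by positivity) (by linarith)))
    · exact ne_of_lt (sub_neg.2 (by
        have : (b:ℝ) < a := by exact_mod_cast h
        exact Real.log_lt_log (by positivity) (by linarith)))
  have hc : ((θ:ℂ) * I) ≠ 0 := mul_ne_zero (Complex.ofReal_ne_zero.2 hθ) Complex.I_ne_zero
  have h1 : ∀ t : ℝ, ff s₀ σ (a, b) t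
      = bb s₀ σ a * star (bb s₀ σ b) * Complex.exp (((θ:ℂ) * I) * (t:ℂ)) := by
    intro t
    rw [ff]
    congr 2
    push_cast
    rw [Complex.ofReal_sub]
    ring
  rw [intervalIntegral.integral_congr (fun t _ => h1 t), intervalIntegral.integral_const_mul,
    integral_exp_mul_complex hc]
  rw [norm_mul, norm_mul, norm_star]
  refine mul_le_mul_of_nonneg_left ?_ (by positivity)
  rw [norm_div]
  have hnum : ‖Complex.exp ((θ:ℂ) * I * (T:ℂ)) - Complex.exp ((θ:ℂ) * I * (2:ℝ))‖ ≤ 2 := by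
    refine le_trans (norm_sub_le _ _) ?_
    have e1 : ‖Complex.exp ((θ:ℂ) * I * (T:ℂ))‖ = 1 := by
      rw [Complex.norm_exp]; simp
    have e2 : ‖Complex.exp ((θ:ℂ) * I * ((2:ℝ):ℂ))‖ = 1 := by
      rw [Complex.norm_exp]; simp
    rw [e1, e2]
    norm_num
  have hden : ‖(θ:ℂ) * I‖ = |θ| := by
    rw [norm_mul, Complex.norm_I, mul_one, Complex.norm_real, Real.norm_eq_abs]
  rw [hden]
  have hpos : 0 < |θ| := abs_pos.2 hθ
  gcongr


lemma summable_normprod (s₀ : ℂ) (σ : ℝ) (h0 : 1 < s₀.re) (hσ : 1 < σ) :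
    Summable (fun q : ℕ × ℕ => ‖bb s₀ σ q.1‖ * ‖bb s₀ σ q.2‖) :=
  (summable_norm_bb s₀ σ h0 hσ).mul_of_nonneg (summable_norm_bb s₀ σ h0 hσ)
    (fun n => norm_nonneg _) (fun n => norm_nonneg _)

lemma interchange (s₀ : ℂ) (σ : ℝ) (h0 : 1 < s₀.re) (hσ : 1 < σ) (T : ℝ) (hT : 2 ≤ T) :
    ∫ t in (2:ℝ)..T, (∑' q : ℕ × ℕ, ff s₀ σ q t).re
      = (∑' q : ℕ × ℕ, ∫ t in (2:ℝ)..T, ff s₀ σ q t).re := by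
  have hsn := summable_normprod s₀ σ h0 hσ
  have hcont : Continuous (fun t => ∑' q : ℕ × ℕ, ff s₀ σ q t) :=
    continuous_tsum (continuous_ff s₀ σ) hsn (fun q t => (norm_ff s₀ σ q t).le)
  have hint : IntervalIntegrable (fun t => ∑' q : ℕ × ℕ, ff s₀ σ q t) volume 2 T :=
    hcont.intervalIntegrable 2 T
  have h1 := Complex.reCLM.intervalIntegral_comp_comm hint
  have h2 : (∫ t in (2:ℝ)..T, ∑' q : ℕ × ℕ, ff s₀ σ q t)
      = ∑' q : ℕ × ℕ, ∫ t in (2:ℝ)..T, ff s₀ σ q t := by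
    rw [intervalIntegral.integral_of_le hT]
    rw [tsum_congr (fun q : ℕ × ℕ => intervalIntegral.integral_of_le hT (f := ff s₀ σ q))]
    refine (integral_tsum_of_summable_integral_norm ?_ ?_).symm
    · exact fun q => (continuous_ff s₀ σ q).integrableOn_Ioc
    · have hval : ∀ q : ℕ × ℕ, ∫ t in Set.Ioc (2:ℝ) T, ‖ff s₀ σ q t‖
          = (T-2) * (‖bb s₀ σ q.1‖ * ‖bb s₀ σ q.2‖) := by
        intro q
        rw [show (fun t => ‖ff s₀ σ q t‖) = fun _ => ‖bb s₀ σ q.1‖ * ‖bb s₀ σ q.2‖ from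
          funext fun t => norm_ff s₀ σ q t]
        rw [setIntegral_const, Real.volume_real_Ioc_of_le hT,
          smul_eq_mul]
      rw [show (fun q : ℕ × ℕ => ∫ t in Set.Ioc (2:ℝ) T, ‖ff s₀ σ q t‖)
        = fun q : ℕ × ℕ => (T-2) * (‖bb s₀ σ q.1‖ * ‖bb s₀ σ q.2‖) from funext hval]
      exact hsn.mul_left _
  show ∫ t in (2:ℝ)..T, Complex.reCLM (∑' q : ℕ × ℕ, ff s₀ σ q t) = _
  rw [h1, h2]
  rfl



lemma MM_nonneg (s₀ : ℂ) (σ : ℝ) (q : ℕ × ℕ) : 0 ≤ MM s₀ σ q := by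
  have := zB_nonneg s₀.re
  have h1 : (0:ℝ) ≤ ((q.1:ℝ)+2)^(-σ-(σ-1)/2) * |(q.1:ℝ)-(q.2:ℝ)|^(-(1+(σ-1)/2)) := by positivity
  have h2 : (0:ℝ) ≤ ((q.2:ℝ)+2)^(-σ-(σ-1)/2) * |(q.2:ℝ)-(q.1:ℝ)|^(-(1+(σ-1)/2)) := by positivity
  rw [MM]
  positivity

lemma summable_MM (s₀ : ℂ) (σ : ℝ) (hσ : 1 < σ) : Summable (MM s₀ σ) := by
  have hα : 1 < σ + (σ-1)/2 := by linarith
  have hβ : 1 < 1 + (σ-1)/2 := by linarith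
  have h1 := (summable_m1 (σ + (σ-1)/2) (1 + (σ-1)/2) hα hβ).congr
    (fun q : ℕ × ℕ => show _ = ((q.1:ℝ)+2)^(-σ-(σ-1)/2) * |(q.1:ℝ)-(q.2:ℝ)|^(-(1+(σ-1)/2)) by
      congr 1
      congr 1
      ring)
  have h2 := (summable_m2 (σ + (σ-1)/2) (1 + (σ-1)/2) hα hβ).congr
    (fun q : ℕ × ℕ => show _ = ((q.2:ℝ)+2)^(-σ-(σ-1)/2) * |(q.2:ℝ)-(q.1:ℝ)|^(-(1+(σ-1)/2)) by
      congr 1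
      congr 1
      ring)
  exact ((h1.add h2).mul_left _).congr (fun q => rfl)

lemma EE_bound (s₀ : ℂ) (σ : ℝ) (h0 : 1 < s₀.re) (hσ : 1 < σ) (T : ℝ) (q : ℕ × ℕ) :
    ‖EE s₀ σ T q‖ ≤ MM s₀ σ q := by
  obtain ⟨a, b⟩ := q
  by_cases hab : a = b
  · subst hab
    rw [EE, DD, if_pos rfl, diag_integral, sub_self, norm_zero]
    exact MM_nonneg s₀ σ (a, a)
  · rw [EE, DD, if_neg hab, sub_zero]
    have hb1 : ‖bb s₀ σ a‖ ≤ zB s₀.re * ((a:ℝ)+2)^(-σ) := norm_bb_le s₀ σ h0 a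
    have hb2 : ‖bb s₀ σ b‖ ≤ zB s₀.re * ((b:ℝ)+2)^(-σ) := norm_bb_le s₀ σ h0 b
    have hz := zB_nonneg s₀.re
    have step1 : ‖∫ t in (2:ℝ)..T, ff s₀ σ (a, b) t‖
        ≤ zB s₀.re^2 * (((a:ℝ)+2)^(-σ) * ((b:ℝ)+2)^(-σ) * (2 / |LL b - LL a|)) := by
      refine le_trans (offdiag_integral s₀ σ a b hab T) ?_
      have h2 : (0:ℝ) ≤ 2 / |LL b - LL a| := by positivity
      calc ‖bb s₀ σ a‖ * ‖bb s₀ σ b‖ * (2 / |LL b - LL a|)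
          ≤ (zB s₀.re * ((a:ℝ)+2)^(-σ)) * (zB s₀.re * ((b:ℝ)+2)^(-σ)) * (2 / |LL b - LL a|) := by
            refine mul_le_mul_of_nonneg_right ?_ h2
            exact mul_le_mul hb1 hb2 (norm_nonneg _) (by positivity)
        _ = zB s₀.re^2 * (((a:ℝ)+2)^(-σ) * ((b:ℝ)+2)^(-σ) * (2 / |LL b - LL a|)) := by ring
    refine le_trans step1 ?_
    rw [MM]
    rcases Nat.lt_or_ge a b with h | h
    · have habs : |LL b - LL a| = LL b - LL a := abs_of_pos (sub_pos.2 (LL_strictMono h))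
      rw [habs]
      have hc := core σ hσ a b h
      calc zB s₀.re^2 * (((a:ℝ)+2)^(-σ) * ((b:ℝ)+2)^(-σ) * (2 / (LL b - LL a)))
          ≤ zB s₀.re^2 * (2 * (((a:ℝ)+2)^(-σ - (σ-1)/2) * (|(a:ℝ) - b|)^(-(1+(σ-1)/2)))) :=
            mul_le_mul_of_nonneg_left hc (by positivity)
        _ ≤ 2 * zB s₀.re^2 * (((a:ℝ)+2)^(-σ-(σ-1)/2) * |(a:ℝ)-(b:ℝ)|^(-(1+(σ-1)/2))
            + ((b:ℝ)+2)^(-σ-(σ-1)/2) * |(b:ℝ)-(a:ℝ)|^(-(1+(σ-1)/2))) := by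
            have hpos : (0:ℝ) ≤ ((b:ℝ)+2)^(-σ-(σ-1)/2) * |(b:ℝ)-(a:ℝ)|^(-(1+(σ-1)/2)) := by
              positivity
            nlinarith [sq_nonneg (zB s₀.re)]
    · have hba : b < a := lt_of_le_of_ne h (fun e => hab e.symm)
      have habs : |LL b - LL a| = LL a - LL b := by
        rw [abs_of_neg (sub_neg.2 (LL_strictMono hba))]; ring
      rw [habs]
      have hc := core σ hσ b a hba
      calc zB s₀.re^2 * (((a:ℝ)+2)^(-σ) * ((b:ℝ)+2)^(-σ) * (2 / (LL a - LL b)))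
          = zB s₀.re^2 * (((b:ℝ)+2)^(-σ) * ((a:ℝ)+2)^(-σ) * (2 / (LL a - LL b))) := by ring
        _ ≤ zB s₀.re^2 * (2 * (((b:ℝ)+2)^(-σ - (σ-1)/2) * (|(b:ℝ) - a|)^(-(1+(σ-1)/2)))) :=
            mul_le_mul_of_nonneg_left hc (by positivity)
        _ ≤ 2 * zB s₀.re^2 * (((a:ℝ)+2)^(-σ-(σ-1)/2) * |(a:ℝ)-(b:ℝ)|^(-(1+(σ-1)/2))
            + ((b:ℝ)+2)^(-σ-(σ-1)/2) * |(b:ℝ)-(a:ℝ)|^(-(1+(σ-1)/2))) := by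
            have hpos : (0:ℝ) ≤ ((a:ℝ)+2)^(-σ-(σ-1)/2) * |(a:ℝ)-(b:ℝ)|^(-(1+(σ-1)/2)) := by
              positivity
            nlinarith [sq_nonneg (zB s₀.re)]

lemma summable_EE (s₀ : ℂ) (σ : ℝ) (h0 : 1 < s₀.re) (hσ : 1 < σ) (T : ℝ) :
    Summable (EE s₀ σ T) :=
  Summable.of_norm_bounded (summable_MM s₀ σ hσ) (EE_bound s₀ σ h0 hσ T)

lemma diag_inj : Function.Injective (fun n : ℕ => ((n, n) : ℕ × ℕ)) := fun a b h => by
  simpa using congrArg Prod.fst h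

lemma DD_vanish (s₀ : ℂ) (σ : ℝ) (T : ℝ) :
    ∀ q ∉ Set.range (fun n : ℕ => ((n, n) : ℕ × ℕ)), DD s₀ σ T q = 0 := by
  intro q hq
  obtain ⟨a, b⟩ := q
  rw [DD, if_neg]
  intro h
  simp only [] at h
  subst h
  exact hq ⟨a, rfl⟩

lemma summable_DD (s₀ : ℂ) (σ : ℝ) (h0 : 1 < s₀.re) (hσ : 1 < σ) (T : ℝ) :
    Summable (DD s₀ σ T) := by
  rw [← Function.Injective.summable_iff diag_inj (DD_vanish s₀ σ T)]
  have : (DD s₀ σ T ∘ fun n : ℕ => ((n, n) : ℕ × ℕ))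
      = fun n : ℕ => ((‖bb s₀ σ n‖^2 * (T-2) : ℝ) : ℂ) := by
    funext n
    simp [DD, Function.comp]
  rw [this]
  exact Complex.summable_ofReal.2 ((summable_sq_norm_bb s₀ σ h0 hσ).mul_right _)

lemma tsum_DD (s₀ : ℂ) (σ : ℝ) (h0 : 1 < s₀.re) (hσ : 1 < σ) (T : ℝ) :
    ∑' q : ℕ × ℕ, DD s₀ σ T q = (((∑' n : ℕ, ‖bb s₀ σ n‖^2) * (T-2) : ℝ) : ℂ) := by
  have hsupp : Function.support (DD s₀ σ T) ⊆ Set.range (fun n : ℕ => ((n, n) : ℕ × ℕ)) := by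
    intro q hq
    by_contra hc
    exact hq (DD_vanish s₀ σ T q hc)
  rw [← Function.Injective.tsum_eq diag_inj hsupp]
  have : ∀ n : ℕ, DD s₀ σ T ((n, n) : ℕ × ℕ) = ((‖bb s₀ σ n‖^2 * (T-2) : ℝ) : ℂ) := by
    intro n; simp [DD]
  rw [tsum_congr this, ← Complex.ofReal_tsum]
  rw [tsum_mul_right]

lemma tsum_integral_split (s₀ : ℂ) (σ : ℝ) (h0 : 1 < s₀.re) (hσ : 1 < σ) (T : ℝ) :
    ∑' q : ℕ × ℕ, ∫ t in (2:ℝ)..T, ff s₀ σ q t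
      = (((∑' n : ℕ, ‖bb s₀ σ n‖^2) * (T-2) : ℝ) : ℂ) + ∑' q : ℕ × ℕ, EE s₀ σ T q := by
  have : ∀ q : ℕ × ℕ, (∫ t in (2:ℝ)..T, ff s₀ σ q t) = DD s₀ σ T q + EE s₀ σ T q := by
    intro q
    rw [EE]
    ring
  rw [tsum_congr this, Summable.tsum_add (summable_DD s₀ σ h0 hσ T) (summable_EE s₀ σ h0 hσ T),
    tsum_DD s₀ σ h0 hσ T]



lemma star_exp_real_mul_I (a : ℝ) :
    star (Complex.exp ((a:ℂ) * I)) = Complex.exp (((-a:ℝ):ℂ) * I) := by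
  rw [show star (Complex.exp ((a:ℂ) * I)) = (starRingEnd ℂ) (Complex.exp ((a:ℂ) * I)) from rfl,
    ← Complex.exp_conj]
  congr 1
  rw [map_mul, Complex.conj_I, Complex.conj_ofReal]
  push_cast
  ring

lemma pointwise (s₀ : ℂ) (σ : ℝ) (h0 : 1 < s₀.re) (hσ : 1 < σ) (t : ℝ) :
    ‖∑' p : ℕ × ℕ, ((p.1 + 1 : ℕ) : ℂ) ^ (-s₀) *
        ((p.1 + p.2 + 2 : ℕ) : ℂ) ^ (-((σ : ℂ) + t * Complex.I))‖ ^ 2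
      = (∑' q : ℕ × ℕ, ff s₀ σ q t).re := by
  have hs : 1 < ((σ:ℂ) + (t:ℂ) * I).re := by
    simp only [Complex.add_re, Complex.ofReal_re, Complex.mul_re, Complex.I_re, Complex.I_im,
      Complex.ofReal_im]
    simpa using hσ
  rw [reindex s₀ _ h0 hs]
  set gg : ℕ → ℂ := fun n => bb s₀ σ n * Complex.exp (((-(t * LL n) : ℝ):ℂ) * I) with hgg
  have hterm : ∀ n : ℕ, A s₀ n * ((n+2:ℕ):ℂ)^(-((σ:ℂ) + (t:ℂ)*I)) = gg n := by
    intro n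
    rw [cpow_split σ t n]
    simp only [hgg, bb]
    push_cast
    ring
  rw [tsum_congr hterm]
  have hngg : ∀ n, ‖gg n‖ = ‖bb s₀ σ n‖ := by
    intro n
    rw [hgg]
    simp only [norm_mul]
    have : ‖Complex.exp (((-(t * LL n) : ℝ):ℂ) * I)‖ = 1 := by
      rw [Complex.norm_exp]
      simp
    rw [this, mul_one]
  have hsgg : Summable (fun n => ‖gg n‖) :=
    (summable_norm_bb s₀ σ h0 hσ).congr (fun n => (hngg n).symm)
  have hsggs : Summable (fun n => ‖star (gg n)‖) := hsgg.congr (fun n => (norm_star _).symm)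
  have key : ∀ z : ℂ, ‖z‖^2 = (z * star z).re := by
    intro z
    rw [show star z = (starRingEnd ℂ) z from rfl, Complex.mul_conj]
    rw [Complex.ofReal_re, Complex.normSq_eq_norm_sq]
  rw [key]
  congr 1
  rw [tsum_star, tsum_mul_tsum_of_summable_norm hsgg hsggs]
  refine tsum_congr fun q => ?_
  rw [hgg, ff]
  simp only []
  rw [star_mul']
  rw [star_exp_real_mul_I (-(t * LL q.2))]
  have hb2 : star (bb s₀ σ q.2) = (starRingEnd ℂ) (bb s₀ σ q.2) := rfl
  calc bb s₀ σ q.1 * Complex.exp (((-(t * LL q.1) : ℝ):ℂ) * I) *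
        (star (bb s₀ σ q.2) * Complex.exp (((-(-(t * LL q.2)) : ℝ):ℂ) * I))
      = bb s₀ σ q.1 * star (bb s₀ σ q.2) *
        (Complex.exp (((-(t * LL q.1) : ℝ):ℂ) * I) * Complex.exp (((-(-(t * LL q.2)) : ℝ):ℂ) * I)) := by
        ring
    _ = bb s₀ σ q.1 * star (bb s₀ σ q.2) * Complex.exp (((t * (LL q.2 - LL q.1) : ℝ) : ℂ) * I) := by
        rw [← Complex.exp_add]
        congr 1
        push_cast
        ring

lemma const_eq (s₀ : ℂ) (σ : ℝ) (h0 : 1 < s₀.re) (hσ : 1 < σ) :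
    (∑' k : ℕ, ‖∑ m ∈ Finset.Icc 1 (k - 1), ((m : ℕ) : ℂ) ^ (-s₀)‖ ^ 2 * (k : ℝ) ^ (-(2 * σ)))
      = ∑' n : ℕ, ‖bb s₀ σ n‖^2 := by
  set g : ℕ → ℝ := fun k => ‖∑ m ∈ Finset.Icc 1 (k - 1), ((m : ℕ) : ℂ) ^ (-s₀)‖ ^ 2
    * (k : ℝ) ^ (-(2 * σ)) with hgdef
  have hgb : ∀ k, g k ≤ zB s₀.re ^2 * (k : ℝ) ^ (-(2 * σ)) := by
    intro k
    rw [hgdef]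
    refine mul_le_mul_of_nonneg_right ?_ (Real.rpow_nonneg (by positivity) _)
    have := normIccSum_le s₀ h0 (k-1)
    have hnn := norm_nonneg (∑ m ∈ Finset.Icc 1 (k - 1), ((m : ℕ) : ℂ) ^ (-s₀))
    nlinarith
  have hg : Summable g := by
    refine Summable.of_nonneg_of_le (fun k => by positivity) hgb ?_
    exact (Real.summable_nat_rpow.2 (by linarith)).mul_left _
  rw [Summable.tsum_eq_zero_add hg, Summable.tsum_eq_zero_add ((summable_nat_add_iff 1).2 hg)]
  have hg0 : g 0 = 0 := by
    rw [hgdef]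
    simp [Finset.Icc_eq_empty_of_lt]
  have hg1 : g (0+1) = 0 := by
    rw [hgdef]
    norm_num
  rw [hg0, hg1, zero_add, zero_add]
  refine tsum_congr fun n => ?_
  rw [hgdef]
  simp only []
  rw [sq_norm_bb s₀ σ n]
  have h1 : n + 1 + 1 - 1 = n + 1 := rfl
  rw [h1]
  have h2 : ((n + 1 + 1 : ℕ) : ℝ) = (n:ℝ) + 2 := by push_cast; ring
  rw [h2, A]



end S9


theorem stmt9 (s₀ : ℂ) (σ : ℝ) (h0 : 1 < s₀.re) (hσ : 1 < σ) :
    ∃ C : ℝ, ∀ T : ℝ, 2 ≤ T →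
      |(∫ t in (2:ℝ)..T,
          ‖∑' p : ℕ × ℕ, ((p.1 + 1 : ℕ) : ℂ) ^ (-s₀) *
            ((p.1 + p.2 + 2 : ℕ) : ℂ) ^ (-((σ : ℂ) + t * Complex.I))‖ ^ 2)
        - (∑' k : ℕ, ‖∑ m ∈ Finset.Icc 1 (k - 1), ((m : ℕ) : ℂ) ^ (-s₀)‖ ^ 2 *
            (k : ℝ) ^ (-(2 * σ))) * T| ≤ C := by
  classical
  set c₀ : ℝ := ∑' n : ℕ, ‖S9.bb s₀ σ n‖^2 with hc₀
  have hc₀nn : 0 ≤ c₀ := tsum_nonneg (fun n => by positivity)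
  refine ⟨(∑' q : ℕ × ℕ, S9.MM s₀ σ q) + 2 * c₀, ?_⟩
  intro T hT
  have hK := S9.const_eq s₀ σ h0 hσ
  rw [intervalIntegral.integral_congr (fun t _ => S9.pointwise s₀ σ h0 hσ t),
    S9.interchange s₀ σ h0 hσ T hT, S9.tsum_integral_split s₀ σ h0 hσ T, hK]
  rw [Complex.add_re, Complex.ofReal_re]
  have heq : c₀ * (T-2) + (∑' q : ℕ × ℕ, S9.EE s₀ σ T q).re - c₀ * T
      = (∑' q : ℕ × ℕ, S9.EE s₀ σ T q).re - 2*c₀ := by ring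
  rw [heq]
  have hsumE : Summable (fun q : ℕ × ℕ => ‖S9.EE s₀ σ T q‖) :=
    Summable.of_nonneg_of_le (fun q => norm_nonneg _) (S9.EE_bound s₀ σ h0 hσ T)
      (S9.summable_MM s₀ σ hσ)
  have hEnorm : ‖∑' q : ℕ × ℕ, S9.EE s₀ σ T q‖ ≤ ∑' q : ℕ × ℕ, S9.MM s₀ σ q :=
    le_trans (norm_tsum_le_tsum_norm hsumE)
      (Summable.tsum_le_tsum (S9.EE_bound s₀ σ h0 hσ T) hsumE (S9.summable_MM s₀ σ hσ))
  have habs : |(∑' q : ℕ × ℕ, S9.EE s₀ σ T q).re| ≤ ‖∑' q : ℕ × ℕ, S9.EE s₀ σ T q‖ := by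
    exact Complex.abs_re_le_norm _
  have htri : |(∑' q : ℕ × ℕ, S9.EE s₀ σ T q).re - 2*c₀|
      ≤ |(∑' q : ℕ × ℕ, S9.EE s₀ σ T q).re| + |2*c₀| := by
    have := abs_sub_le ((∑' q : ℕ × ℕ, S9.EE s₀ σ T q).re) 0 (2*c₀)
    simpa using this
  have h2c : |2*c₀| = 2*c₀ := abs_of_nonneg (by linarith)
  linarith
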